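/- Conversely, if a graph G does not admit a proper 3-coloring, then for every supported solution J of I_G w.r.t. the setting S of the 3-colorability reduction, the Boolean query Q = Q1 ∨ Q2 evaluates to true on J; hence the supported certain answers to Q over I_G are nonempty (contain the empty tuple). -/
import Mathlib



namespace DE

abbrev Var := ℕ

inductive Term (C : Type) where
  | const : C → Term C
  | null : ℕ → Term C

structure Atom (R C : Type) where
  rel : R
  args : List (Var ⊕ C)

structure Fact (R C : Type) where
  rel : R
  args : List (Term C)

abbrev Instance (R C : Type) := Set (Fact R C)

def termOf {C : Type} (h : Var → Term C) : Var ⊕ C → Term C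
  | Sum.inl v => h v
  | Sum.inr c => Term.const c

def applyAtom {R C : Type} (h : Var → Term C) (a : Atom R C) : Fact R C :=
  ⟨a.rel, a.args.map (termOf h)⟩

/-- `h` maps every atom of `as` into the instance `I`. -/
def holdsBody {R C : Type} (I : Instance R C) (h : Var → Term C)
    (as : List (Atom R C)) : Prop :=
  ∀ a ∈ as, applyAtom h a ∈ I

/-- A tuple-generating dependency. -/
structure TGD (R C : Type) where
  body : List (Atom R C)
  head : List (Atom R C)
  frontier : List Var
  exvars : List Var

def varsOf {R C : Type} (as : List (Atom R C)) : Set Var :=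
  {v | ∃ a ∈ as, (Sum.inl v : Var ⊕ C) ∈ a.args}

/-- Well-formedness of a TGD: frontier variables occur in the body, existential
variables do not, and every head variable is a frontier or existential variable. -/
def TGD.wf {R C : Type} (ρ : TGD R C) : Prop :=
  (∀ v ∈ ρ.frontier, v ∈ varsOf ρ.body) ∧
  (∀ z ∈ ρ.exvars, z ∉ varsOf ρ.body) ∧
  (∀ v ∈ varsOf ρ.head, v ∈ ρ.frontier ∨ v ∈ ρ.exvars)

/-- Satisfaction of a TGD by an instance. -/
def satTGD {R C : Type} (I : Instance R C) (ρ : TGD R C) : Prop :=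
  ∀ h : Var → Term C, holdsBody I h ρ.body →
    ∃ h' : Var → Term C, (∀ v ∈ varsOf ρ.body, h' v = h v) ∧ holdsBody I h' ρ.head

/-- An equality-generating dependency. -/
structure EGD (R C : Type) where
  body : List (Atom R C)
  lhs : Var
  rhs : Var

def satEGD {R C : Type} (I : Instance R C) (η : EGD R C) : Prop :=
  ∀ h : Var → Term C, holdsBody I h η.body → h η.lhs = h η.rhs

/-- An ex-choice: given a TGD and a tuple of constants for its frontier,
a constant for each existential variable. -/
abbrev ExChoice (R C : Type) := TGD R C → List C → Var → C

def constHom {C : Type} (h : Var → C) : Var → Term C := fun v => Term.const (h v)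

/-- `I` satisfies all ground versions of the TGD `ρ` that are coherent with `γ`. -/
def satTGDcoh {R C : Type} (I : Instance R C) (γ : ExChoice R C) (ρ : TGD R C) : Prop :=
  ∀ h : Var → C, (∀ z ∈ ρ.exvars, h z = γ ρ (ρ.frontier.map h) z) →
    holdsBody I (constHom h) ρ.body → holdsBody I (constHom h) ρ.head

/-- A data exchange setting: source-to-target TGDs, target TGDs, target EGDs. -/
structure Setting (R C : Type) where
  sigmaST : List (TGD R C)
  sigmaT : List (TGD R C)
  sigmaE : List (EGD R C)

def Setting.wf {R C : Type} (S : Setting R C) : Prop :=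
  ∀ ρ ∈ S.sigmaST ++ S.sigmaT, ρ.wf

/-- Classical solution: `I ∪ J` satisfies `Σst` and `J` satisfies `Σt`. -/
def classicalSolution {R C : Type} (S : Setting R C) (I J : Instance R C) : Prop :=
  J.Finite ∧ (∀ ρ ∈ S.sigmaST, satTGD (I ∪ J) ρ) ∧
    (∀ ρ ∈ S.sigmaT, satTGD J ρ) ∧ (∀ η ∈ S.sigmaE, satEGD J η)

def supportedWith {R C : Type} (S : Setting R C) (γ : ExChoice R C)
    (I J : Instance R C) : Prop :=
  (∀ ρ ∈ S.sigmaST, satTGDcoh (I ∪ J) γ ρ) ∧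
    (∀ ρ ∈ S.sigmaT, satTGDcoh J γ ρ) ∧ (∀ η ∈ S.sigmaE, satEGD J η)

/-- Supported solution: for some ex-choice `γ`, `I ∪ J` satisfies `Σst^γ`,
`J` satisfies `Σt^γ`, and no proper subset of `J` does. -/
def supportedSolution {R C : Type} (S : Setting R C) (I J : Instance R C) : Prop :=
  J.Finite ∧ ∃ γ : ExChoice R C, supportedWith S γ I J ∧
    ∀ J' : Instance R C, J' ⊂ J → ¬ supportedWith S γ I J'

/-- An instance without labeled nulls (a database). -/
def nullFree {R C : Type} (I : Instance R C) : Prop :=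
  ∀ f ∈ I, ∀ t ∈ f.args, ∃ c : C, t = Term.const c

end DE

inductive GRel : Type
  | V | Es | Col | ColT | Et | HasC

namespace ThreeCol

def rho1 (C : Type) : DE.TGD GRel C :=
  ⟨[⟨GRel.Col, [Sum.inl 0]⟩], [⟨GRel.ColT, [Sum.inl 0]⟩], [0], []⟩

def rho2 (C : Type) : DE.TGD GRel C :=
  ⟨[⟨GRel.Es, [Sum.inl 0, Sum.inl 1]⟩], [⟨GRel.Et, [Sum.inl 0, Sum.inl 1]⟩], [0, 1], []⟩

def rho3 (C : Type) : DE.TGD GRel C :=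
  ⟨[⟨GRel.V, [Sum.inl 0]⟩], [⟨GRel.HasC, [Sum.inl 0, Sum.inl 1]⟩], [0], [1]⟩

def setting (C : Type) : DE.Setting GRel C := ⟨[rho1 C, rho2 C, rho3 C], [], []⟩

/-- The source instance `I_G` encoding the graph `(Vtx, E)` and the three colors. -/
def IG {Vtx C : Type} (E : Vtx → Vtx → Prop) (emb : Vtx → C) (r g b : C) :
    DE.Instance GRel C :=
  {f | (∃ v, f = ⟨GRel.V, [DE.Term.const (emb v)]⟩) ∨
       (∃ u v, E u v ∧ f = ⟨GRel.Es, [DE.Term.const (emb u), DE.Term.const (emb v)]⟩) ∨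
       f = ⟨GRel.Col, [DE.Term.const r]⟩ ∨
       f = ⟨GRel.Col, [DE.Term.const g]⟩ ∨
       f = ⟨GRel.Col, [DE.Term.const b]⟩}

/-- `Q1`: some node has a "color" that is not one of the copied colors. -/
def Q1 {C : Type} (J : DE.Instance GRel C) : Prop :=
  ∃ x y : DE.Term C, (⟨GRel.HasC, [x, y]⟩ : DE.Fact GRel C) ∈ J ∧
    (⟨GRel.ColT, [y]⟩ : DE.Fact GRel C) ∉ J

/-- `Q2`: the two endpoints of some edge share a color. -/
def Q2 {C : Type} (J : DE.Instance GRel C) : Prop :=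
  ∃ x y z : DE.Term C, (⟨GRel.Et, [x, y]⟩ : DE.Fact GRel C) ∈ J ∧
    (⟨GRel.HasC, [x, z]⟩ : DE.Fact GRel C) ∈ J ∧
    (⟨GRel.HasC, [y, z]⟩ : DE.Fact GRel C) ∈ J

/-- The target instance induced by a coloring `μ`. -/
def Jsol {Vtx C : Type} (E : Vtx → Vtx → Prop) (emb : Vtx → C) (r g b : C)
    (μ : Vtx → C) : DE.Instance GRel C :=
  {f | (∃ v, f = ⟨GRel.HasC, [DE.Term.const (emb v), DE.Term.const (μ v)]⟩) ∨
       (∃ u v, E u v ∧ f = ⟨GRel.Et, [DE.Term.const (emb u), DE.Term.const (emb v)]⟩) ∨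
       f = ⟨GRel.ColT, [DE.Term.const r]⟩ ∨
       f = ⟨GRel.ColT, [DE.Term.const g]⟩ ∨
       f = ⟨GRel.ColT, [DE.Term.const b]⟩}

end ThreeCol

section MyAux
open DE ThreeCol
variable {Vtx C : Type} {E : Vtx → Vtx → Prop} {emb : Vtx → C} {r g b : C}

lemma myIG_rel {f : DE.Fact GRel C} (hf : f ∈ IG E emb r g b) :
    f.rel = GRel.V ∨ f.rel = GRel.Es ∨ f.rel = GRel.Col := by
  simp only [IG, Set.mem_setOf_eq] at hf
  rcases hf with ⟨v, rfl⟩ | ⟨u, v, _, rfl⟩ | rfl | rfl | rfl <;> simp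

lemma myJsol_rel {μ : Vtx → C} {f : DE.Fact GRel C} (hf : f ∈ Jsol E emb r g b μ) :
    f.rel = GRel.HasC ∨ f.rel = GRel.Et ∨ f.rel = GRel.ColT := by
  simp only [Jsol, Set.mem_setOf_eq] at hf
  rcases hf with ⟨v, rfl⟩ | ⟨u, v, _, rfl⟩ | rfl | rfl | rfl <;> simp

end MyAux

open ThreeCol in
/-- if `G` is not 3-colorable then the query `Q = Q1 ∨ Q2` is true
on every supported solution of `I_G`; hence the empty tuple is a supported
certain answer to the Boolean query `Q`. -/
theorem query_true_on_all_supported_solutions {Vtx C : Type} [Fintype Vtx]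
    (E : Vtx → Vtx → Prop) (emb : Vtx → C) (hemb : Function.Injective emb)
    (r g b : C) (hrg : r ≠ g) (hrb : r ≠ b) (hgb : g ≠ b)
    (hdisj : ∀ v, emb v ≠ r ∧ emb v ≠ g ∧ emb v ≠ b)
    (hnc : ¬ ∃ μ : Vtx → C, (∀ v, μ v = r ∨ μ v = g ∨ μ v = b) ∧
        ∀ u v, E u v → μ u ≠ μ v) :
    ∀ J : DE.Instance GRel C,
      DE.supportedSolution (setting C) (IG E emb r g b) J → Q1 J ∨ Q2 J := by
  intro J hJ
  obtain ⟨hfin, γ, hsw, hmin⟩ := hJ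
  set I : DE.Instance GRel C := IG E emb r g b with hI
  set c : Vtx → C := fun v => γ (rho3 C) [emb v] 1 with hc
  have hst := hsw.1
  have h2 := hst (rho2 C) (by simp [setting])
  have h3 := hst (rho3 C) (by simp [setting])
  have h1 := hst (rho1 C) (by simp [setting])
  -- (A) HasC facts
  have hA : ∀ v, (⟨GRel.HasC, [DE.Term.const (emb v), DE.Term.const (c v)]⟩ :
      DE.Fact GRel C) ∈ J := by
    intro v
    have hb : DE.holdsBody (I ∪ J)
        (DE.constHom (fun n => if n = 0 then emb v else γ (rho3 C) [emb v] 1))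
        (rho3 C).body := by
      intro a ha
      simp only [rho3, List.mem_singleton] at ha
      subst ha
      left
      simp only [DE.applyAtom, DE.termOf, DE.constHom, List.map, hI, IG,
        Set.mem_setOf_eq]
      exact Or.inl ⟨v, by simp⟩
    have hcoh : ∀ z ∈ (rho3 C).exvars,
        (fun n => if n = 0 then emb v else γ (rho3 C) [emb v] 1) z =
        γ (rho3 C) ((rho3 C).frontier.map
          (fun n => if n = 0 then emb v else γ (rho3 C) [emb v] 1)) z := by
      intro z hz
      simp only [rho3, List.mem_singleton] at hz
      subst hz
      simp [rho3]
    have hh := h3 _ hcoh hb ⟨GRel.HasC, [Sum.inl 0, Sum.inl 1]⟩ (by simp [rho3])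
    simp only [DE.applyAtom, DE.termOf, DE.constHom, List.map] at hh
    norm_num at hh
    rcases hh with hh | hh
    · rcases myIG_rel hh with h | h | h <;> simp at h
    · exact hh
  -- (B) Et facts
  have hB : ∀ u v, E u v → (⟨GRel.Et, [DE.Term.const (emb u), DE.Term.const (emb v)]⟩ :
      DE.Fact GRel C) ∈ J := by
    intro u v huv
    have hb : DE.holdsBody (I ∪ J)
        (DE.constHom (fun n => if n = 0 then emb u else emb v)) (rho2 C).body := by
      intro a ha
      simp only [rho2, List.mem_singleton] at ha
      subst ha
      left
      simp only [DE.applyAtom, DE.termOf, DE.constHom, List.map, hI, IG,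
        Set.mem_setOf_eq]
      exact Or.inr (Or.inl ⟨u, v, huv, by simp⟩)
    have hh := h2 _ (by intro z hz; simp [rho2] at hz) hb
      ⟨GRel.Et, [Sum.inl 0, Sum.inl 1]⟩ (by simp [rho2])
    simp only [DE.applyAtom, DE.termOf, DE.constHom, List.map] at hh
    norm_num at hh
    rcases hh with hh | hh
    · rcases myIG_rel hh with h | h | h <;> simp at h
    · exact hh
  -- (C) ColT facts
  have hC : ∀ x : C, x = r ∨ x = g ∨ x = b →
      (⟨GRel.ColT, [DE.Term.const x]⟩ : DE.Fact GRel C) ∈ J := by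
    intro x hx
    have hb : DE.holdsBody (I ∪ J) (DE.constHom (fun _ => x)) (rho1 C).body := by
      intro a ha
      simp only [rho1, List.mem_singleton] at ha
      subst ha
      left
      simp only [DE.applyAtom, DE.termOf, DE.constHom, List.map, hI, IG,
        Set.mem_setOf_eq]
      rcases hx with rfl | rfl | rfl
      · exact Or.inr (Or.inr (Or.inl rfl))
      · exact Or.inr (Or.inr (Or.inr (Or.inl rfl)))
      · exact Or.inr (Or.inr (Or.inr (Or.inr rfl)))
    have hh := h1 _ (by intro z hz; simp [rho1] at hz) hb
      ⟨GRel.ColT, [Sum.inl 0]⟩ (by simp [rho1])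
    simp only [DE.applyAtom, DE.termOf, DE.constHom, List.map] at hh
    rcases hh with hh | hh
    · rcases myIG_rel hh with h | h | h <;> simp at h
    · exact hh
  -- canonical solution
  set J0 : DE.Instance GRel C := Jsol E emb r g b c with hJ0
  have hsub : J0 ⊆ J := by
    intro f hf
    simp only [hJ0, Jsol, Set.mem_setOf_eq] at hf
    rcases hf with ⟨v, rfl⟩ | ⟨u, v, huv, rfl⟩ | rfl | rfl | rfl
    · exact hA v
    · exact hB u v huv
    · exact hC r (Or.inl rfl)
    · exact hC g (Or.inr (Or.inl rfl))
    · exact hC b (Or.inr (Or.inr rfl))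
  -- J0 is supported with γ
  have hsw0 : DE.supportedWith (setting C) γ I J0 := by
    refine ⟨?_, by simp [setting, DE.satTGDcoh], by simp [setting]⟩
    intro ρ hρ
    simp only [setting, List.mem_cons, List.not_mem_nil, or_false] at hρ
    rcases hρ with rfl | rfl | rfl
    · -- rho1
      intro h _ hbody
      have hb := hbody ⟨GRel.Col, [Sum.inl 0]⟩ (by simp [rho1])
      simp only [DE.applyAtom, DE.termOf, DE.constHom, List.map] at hb
      intro a ha
      simp only [rho1, List.mem_singleton] at ha
      subst ha
      simp only [DE.applyAtom, DE.termOf, DE.constHom, List.map]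
      rcases hb with hb | hb
      · simp only [hI, IG, Set.mem_setOf_eq] at hb
        rcases hb with ⟨v, hv⟩ | ⟨u, v, _, hv⟩ | hv | hv | hv <;>
          simp only [DE.Fact.mk.injEq] at hv
        · exact absurd hv.1 (by simp)
        · exact absurd hv.1 (by simp)
        all_goals {
          obtain ⟨-, hargs⟩ := hv
          simp only [List.cons.injEq, DE.Term.const.injEq, and_true] at hargs
          right
          simp only [hJ0, Jsol, Set.mem_setOf_eq, hargs]
          tauto }
      · rcases myJsol_rel hb with h' | h' | h'
        · exact absurd h' (by simp)
        · exact absurd h' (by simp)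
        · simp only [hJ0, Jsol, Set.mem_setOf_eq] at hb
          rcases hb with ⟨v, hv⟩ | ⟨u, v, _, hv⟩ | hv | hv | hv <;>
            simp only [DE.Fact.mk.injEq] at hv
          · exact absurd hv.1 (by simp)
          · exact absurd hv.1 (by simp)
          all_goals {
            obtain ⟨-, hargs⟩ := hv
            simp only [List.cons.injEq, DE.Term.const.injEq, and_true] at hargs
            right
            simp only [hJ0, Jsol, Set.mem_setOf_eq, hargs]
            tauto }
    · -- rho2
      intro h _ hbody
      have hb := hbody ⟨GRel.Es, [Sum.inl 0, Sum.inl 1]⟩ (by simp [rho2])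
      simp only [DE.applyAtom, DE.termOf, DE.constHom, List.map] at hb
      intro a ha
      simp only [rho2, List.mem_singleton] at ha
      subst ha
      simp only [DE.applyAtom, DE.termOf, DE.constHom, List.map]
      rcases hb with hb | hb
      · simp only [hI, IG, Set.mem_setOf_eq] at hb
        rcases hb with ⟨v, hv⟩ | ⟨u, v, huv, hv⟩ | hv | hv | hv <;>
          simp only [DE.Fact.mk.injEq] at hv
        · exact absurd hv.1 (by simp)
        · obtain ⟨-, hargs⟩ := hv
          simp only [List.cons.injEq, DE.Term.const.injEq, and_true] at hargs
          right
          simp only [hJ0, Jsol, Set.mem_setOf_eq, hargs.1, hargs.2]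
          exact Or.inr (Or.inl ⟨u, v, huv, rfl⟩)
        all_goals exact absurd hv.1 (by simp)
      · rcases myJsol_rel hb with h' | h' | h' <;> exact absurd h' (by simp)
    · -- rho3
      intro h hcoh hbody
      have hb := hbody ⟨GRel.V, [Sum.inl 0]⟩ (by simp [rho3])
      simp only [DE.applyAtom, DE.termOf, DE.constHom, List.map] at hb
      intro a ha
      simp only [rho3, List.mem_singleton] at ha
      subst ha
      simp only [DE.applyAtom, DE.termOf, DE.constHom, List.map]
      have hcoh1 := hcoh 1 (by simp [rho3])
      simp only [rho3, List.map] at hcoh1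
      rcases hb with hb | hb
      · simp only [hI, IG, Set.mem_setOf_eq] at hb
        rcases hb with ⟨v, hv⟩ | ⟨u, v, _, hv⟩ | hv | hv | hv <;>
          simp only [DE.Fact.mk.injEq] at hv
        · obtain ⟨-, hargs⟩ := hv
          simp only [List.cons.injEq, DE.Term.const.injEq, and_true] at hargs
          right
          simp only [hJ0, Jsol, Set.mem_setOf_eq]
          refine Or.inl ⟨v, ?_⟩
          simp only [DE.Fact.mk.injEq, List.cons.injEq, DE.Term.const.injEq,
            and_true, true_and]
          refine ⟨hargs, ?_⟩
          rw [hcoh1, hargs, hc]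
          rfl
        all_goals exact absurd hv.1 (by simp)
      · rcases myJsol_rel hb with h' | h' | h' <;> exact absurd h' (by simp)
  -- minimality: J = J0
  have hEq : J0 = J := by
    by_contra hne
    exact hmin J0 (HasSubset.Subset.ssubset_of_ne hsub hne) hsw0
  -- final case split
  by_cases hall : ∀ v, c v = r ∨ c v = g ∨ c v = b
  · right
    have : ∃ u v, E u v ∧ c u = c v := by
      by_contra hcon
      push_neg at hcon
      exact hnc ⟨c, hall, fun u v huv => hcon u v huv⟩
    obtain ⟨u, v, huv, hcc⟩ := this
    refine ⟨DE.Term.const (emb u), DE.Term.const (emb v), DE.Term.const (c u),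
      hB u v huv, hA u, ?_⟩
    rw [hcc]
    exact hA v
  · left
    push_neg at hall
    obtain ⟨v, hv⟩ := hall
    refine ⟨DE.Term.const (emb v), DE.Term.const (c v), hA v, ?_⟩
    intro hmem
    rw [← hEq] at hmem
    simp only [hJ0, Jsol, Set.mem_setOf_eq] at hmem
    rcases hmem with ⟨w, hw⟩ | ⟨u, w, _, hw⟩ | hw | hw | hw <;>
      simp only [DE.Fact.mk.injEq] at hw
    · exact absurd hw.1 (by simp)
    · exact absurd hw.1 (by simp)
    all_goals {
      obtain ⟨-, hargs⟩ := hw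
      simp only [List.cons.injEq, DE.Term.const.injEq, and_true] at hargs
      first
      | exact hv.1 hargs
      | exact hv.2.1 hargs
      | exact hv.2.2 hargs }
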